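/- Define $c_0 := 1$ and, for $k\ge 1$, let $c_k$ be the smallest integer such that for all abelian groups $\Gamma_1,\dots,\Gamma_k$, labelings $\psi_i\colon E\to\Gamma_i$, elements $f_i\in\Gamma_i$, subset $B\subseteq E$ with $\psi_i(B)\ne f_i$ for all $i$, and pairwise disjoint nonempty subsets $X_1,\dots,X_\ell\subseteq B$, $Y_1,\dots,Y_\ell\subseteq E\setminus B$ with $\ell\ge c_k$, there exist $1\le i\le j\le \ell$ with $\psi_t(B_{i,j})\ne f_t$ for all $t\in[k]$, where $B_{i,j} := (B\setminus(X_i\cup\dots\cup X_j))\cup(Y_i\cup\dots\cup Y_j)$. Then $c_k \le k\cdot c_{k-1}+1$ for all $k\ge 1$. -/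

import Mathlib

/-- `Good k n` says: for every finite set `E`, `k` group labelings with forbidden values,
a set `B` avoiding them, and `ℓ ≥ n` pairwise disjoint nonempty exchange sets,
some exchanged set `B_{i,j}` avoids all forbidden values. -/
def Good (k n : ℕ) : Prop :=
  ∀ (E : Type) [DecidableEq E] (Γ : Fin k → Type) [∀ t, AddCommGroup (Γ t)]
    (ψ : ∀ t, E → Γ t) (f : ∀ t, Γ t) (B : Finset E) (ℓ : ℕ) (X Y : Fin ℓ → Finset E),
    (∀ t, ∑ e ∈ B, ψ t e ≠ f t) →
    (∀ i, X i ⊆ B) → (∀ i, ∀ e ∈ Y i, e ∉ B) →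
    (∀ i, (X i).Nonempty) → (∀ i, (Y i).Nonempty) →
    (∀ i j, i ≠ j → Disjoint (X i) (X j)) →
    (∀ i j, i ≠ j → Disjoint (Y i) (Y j)) →
    n ≤ ℓ →
    ∃ i j : Fin ℓ, i ≤ j ∧ ∀ t,
      ∑ e ∈ ((B \ (Finset.Icc i j).biUnion X) ∪ (Finset.Icc i j).biUnion Y), ψ t e ≠ f t

/-- `cseq k` is the smallest `n` such that `Good k n` holds (`⊤` if there is none). -/
noncomputable def cseq (k : ℕ) : ℕ∞ :=
  sInf ((fun n : ℕ => (n : ℕ∞)) '' {n | Good k n})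

def Tset (ℓ : ℕ) (p q : ℕ) : Finset (Fin ℓ) :=
  Finset.univ.filter fun a => p ≤ a.val ∧ a.val < q

lemma mem_Tset {ℓ p q : ℕ} {a : Fin ℓ} : a ∈ Tset ℓ p q ↔ p ≤ a.val ∧ a.val < q := by
  simp [Tset]

lemma Tset_union {ℓ p q r : ℕ} (h1 : p ≤ q) (h2 : q ≤ r) :
    Tset ℓ p q ∪ Tset ℓ q r = Tset ℓ p r := by
  ext a; simp only [Finset.mem_union, mem_Tset]; omega

lemma Tset_disj {ℓ p q q' r : ℕ} (h : q ≤ q') :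
    Disjoint (Tset ℓ p q) (Tset ℓ q' r) := by
  rw [Finset.disjoint_left]
  intro a ha ha'
  rw [mem_Tset] at ha ha'
  omega

lemma Icc_eq_Tset {ℓ : ℕ} (i j : Fin ℓ) : Finset.Icc i j = Tset ℓ i.val (j.val + 1) := by
  ext a; rw [Finset.mem_Icc, mem_Tset, Fin.le_def, Fin.le_def]; omega

lemma Tset_sum_split {ℓ : ℕ} {G : Type} [AddCommGroup G] (d : Fin ℓ → G)
    {p q r : ℕ} (h1 : p ≤ q) (h2 : q ≤ r) :
    ∑ a ∈ Tset ℓ p r, d a = ∑ a ∈ Tset ℓ p q, d a + ∑ a ∈ Tset ℓ q r, d a := by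
  rw [← Tset_union h1 h2, Finset.sum_union (Tset_disj le_rfl)]

lemma Tset_biUnion_blocks {ℓ c : ℕ} (m : Fin (c + 1) → ℕ) (hmono : Monotone m) :
    ∀ (n : ℕ) (s s' : Fin c), s.val + n = s'.val →
      (Finset.Icc s s').biUnion (fun r => Tset ℓ (m r.castSucc) (m r.succ))
        = Tset ℓ (m s.castSucc) (m s'.succ) := by
  intro n
  induction n with
  | zero =>
      intro s s' hss'
      have : s = s' := Fin.ext (by omega)
      subst this
      rw [Finset.Icc_self, Finset.singleton_biUnion]
  | succ n ih =>
      intro s s' hss'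
      have h1 : s'.val - 1 < c := by omega
      have hsplit : Finset.Icc s s' = insert s' (Finset.Icc s ⟨s'.val - 1, h1⟩) := by
        ext a
        simp only [Finset.mem_insert, Finset.mem_Icc, Fin.le_def, Fin.ext_iff]
        omega
      have hii : (⟨s'.val - 1, h1⟩ : Fin c).succ = s'.castSucc := by
        apply Fin.ext
        rw [Fin.val_succ, Fin.coe_castSucc]
        show s'.val - 1 + 1 = s'.val
        omega
      rw [hsplit, Finset.biUnion_insert, ih s ⟨s'.val - 1, h1⟩ (by show s.val + n = s'.val - 1; omega), hii,
          Finset.union_comm]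
      refine Tset_union (hmono ?_) (hmono ?_) <;>
        · simp only [Fin.le_def, Fin.coe_castSucc, Fin.val_succ]; omega

lemma sum_exchange {E : Type} [DecidableEq E] {G : Type} [AddCommGroup G]
    (ψ : E → G) (B : Finset E) {ℓ : ℕ} (X Y : Fin ℓ → Finset E)
    (hX : ∀ i, X i ⊆ B) (hY : ∀ i, ∀ e ∈ Y i, e ∉ B)
    (hXd : ∀ i j : Fin ℓ, i ≠ j → Disjoint (X i) (X j))
    (hYd : ∀ i j : Fin ℓ, i ≠ j → Disjoint (Y i) (Y j))
    (s : Finset (Fin ℓ)) :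
    ∑ e ∈ ((B \ s.biUnion X) ∪ s.biUnion Y), ψ e
      = ∑ e ∈ B, ψ e + ∑ a ∈ s, ((∑ e ∈ Y a, ψ e) - ∑ e ∈ X a, ψ e) := by
  have hUX : s.biUnion X ⊆ B := Finset.biUnion_subset.mpr fun a _ => hX a
  have hdisj : Disjoint (B \ s.biUnion X) (s.biUnion Y) := by
    rw [Finset.disjoint_right]
    intro e he
    rw [Finset.mem_biUnion] at he
    obtain ⟨a, _, hea⟩ := he
    intro heB
    exact hY a e hea (Finset.mem_sdiff.mp heB).1
  rw [Finset.sum_union hdisj, Finset.sum_sdiff_eq_sub hUX,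
      Finset.sum_biUnion (fun a _ b _ hab => hXd a b hab),
      Finset.sum_biUnion (fun a _ b _ hab => hYd a b hab),
      Finset.sum_sub_distrib]
  abel

lemma good_step (k c : ℕ) (h : Good k c) : Good (k + 1) ((k + 1) * c + 1) := by
  intro E _ Γ _ ψ f B ℓ X Y hB hXB hYB hXne hYne hXd hYd hℓ
  by_contra hcon
  push_neg at hcon
  -- hcon : ∀ i j, i ≤ j → ∃ t, sum = f t
  -- the "difference" of pair a in group t
  set d : ∀ t : Fin (k + 1), Fin ℓ → Γ t :=
    fun t a => (∑ e ∈ Y a, ψ t e) - ∑ e ∈ X a, ψ t e with hd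
  have hval : ∀ (t : Fin (k + 1)) (s : Finset (Fin ℓ)),
      ∑ e ∈ ((B \ s.biUnion X) ∪ s.biUnion Y), ψ t e
        = ∑ e ∈ B, ψ t e + ∑ a ∈ s, d t a :=
    fun t s => sum_exchange (ψ t) B X Y hXB hYB hXd hYd s
  -- every position 1 ≤ y ≤ ℓ is "bad" in some colour
  have hbad : ∀ y : ℕ, 1 ≤ y → y ≤ ℓ → ∃ t : Fin (k + 1),
      ∑ e ∈ B, ψ t e + ∑ a ∈ Tset ℓ 0 y, d t a = f t := by
    intro y h1 h2
    have hy : y - 1 < ℓ := by omega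
    obtain ⟨t, ht⟩ := hcon ⟨0, by omega⟩ ⟨y - 1, hy⟩ (Fin.mk_le_mk.mpr (by omega))
    refine ⟨t, ?_⟩
    rw [← ht, hval t, Icc_eq_Tset]
    have : (⟨y - 1, hy⟩ : Fin ℓ).val + 1 = y := by show y - 1 + 1 = y; omega
    rw [this]
  -- a choice function for the bad colour
  have hch : ∀ y : ℕ, ∃ t : Fin (k + 1), 1 ≤ y → y ≤ ℓ →
      ∑ e ∈ B, ψ t e + ∑ a ∈ Tset ℓ 0 y, d t a = f t := by
    intro y
    by_cases hy : 1 ≤ y ∧ y ≤ ℓ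
    · obtain ⟨t, ht⟩ := hbad y hy.1 hy.2
      exact ⟨t, fun _ _ => ht⟩
    · exact ⟨0, fun h1 h2 => absurd ⟨h1, h2⟩ hy⟩
  choose ch hchs using hch
  -- pigeonhole: some colour t has at least c+1 bad positions
  obtain ⟨t, -, htc⟩ :=
    Finset.exists_lt_card_fiber_of_mul_lt_card_of_maps_to
      (s := Finset.Icc 1 ℓ) (t := Finset.univ) (f := ch) (n := c)
      (fun a _ => Finset.mem_univ _)
      (by rw [Finset.card_univ, Fintype.card_fin, Nat.card_Icc]; omega)
  obtain ⟨M, hM, hMc⟩ := Finset.exists_subset_card_eq htc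
  have hMmem : ∀ y ∈ M, 1 ≤ y ∧ y ≤ ℓ ∧
      ∑ e ∈ B, ψ t e + ∑ a ∈ Tset ℓ 0 y, d t a = f t := by
    intro y hy
    have := hM hy
    rw [Finset.mem_filter, Finset.mem_Icc] at this
    exact ⟨this.1.1, this.1.2, this.2 ▸ hchs y this.1.1 this.1.2⟩
  -- the enumeration of M
  set m : Fin (c + 1) → ℕ := fun r => (M.orderIsoOfFin hMc r : ℕ) with hm
  have hmmem : ∀ r, m r ∈ M := fun r => (M.orderIsoOfFin hMc r).2
  have hmono : Monotone m := fun r1 r2 h12 =>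
    Subtype.coe_le_coe.mpr ((M.orderIsoOfFin hMc).monotone h12)
  have hstrict : StrictMono m := fun r1 r2 h12 =>
    Subtype.coe_lt_coe.mpr ((M.orderIsoOfFin hMc).strictMono h12)
  have hm1 : ∀ r, 1 ≤ m r := fun r => (hMmem _ (hmmem r)).1
  have hmℓ : ∀ r, m r ≤ ℓ := fun r => (hMmem _ (hmmem r)).2.1
  -- two M-positions give equal partial sums in colour t
  have hMeq : ∀ p q : ℕ, p ∈ M → q ∈ M → p ≤ q →
      ∑ a ∈ Tset ℓ p q, d t a = 0 := by
    intro p q hp hq hpq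
    have h1 := (hMmem p hp).2.2
    have h2 := (hMmem q hq).2.2
    have := Tset_sum_split (d t) (Nat.zero_le p) hpq
    have heq : ∑ a ∈ Tset ℓ 0 p, d t a = ∑ a ∈ Tset ℓ 0 q, d t a := by
      have := h1.trans h2.symm
      exact add_left_cancel this
    rw [heq] at this
    exact left_eq_add.mp this
  -- the blocks of consecutive positions
  set block : Fin c → Finset (Fin ℓ) := fun s => Tset ℓ (m s.castSucc) (m s.succ) with hblock
  have hcs : ∀ s : Fin c, m s.castSucc < m s.succ := fun s =>
    hstrict (by rw [Fin.lt_def, Fin.coe_castSucc, Fin.val_succ]; omega)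
  have hblock_ne : ∀ s : Fin c, ∃ a : Fin ℓ, a ∈ block s := by
    intro s
    exact ⟨⟨m s.castSucc, lt_of_lt_of_le (hcs s) (hmℓ _)⟩, mem_Tset.mpr ⟨le_rfl, hcs s⟩⟩
  have hblock_disj : ∀ s1 s2 : Fin c, s1 ≠ s2 → Disjoint (block s1) (block s2) := by
    intro s1 s2 h12
    rw [Finset.disjoint_left]
    intro a ha1 ha2
    rw [hblock] at ha1 ha2
    rw [mem_Tset] at ha1 ha2
    have hne : s1.val ≠ s2.val := fun hv => h12 (Fin.ext hv)
    rcases Nat.lt_or_ge s1.val s2.val with hlt | hge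
    · have : m s1.succ ≤ m s2.castSucc := by
        apply hmono
        rw [Fin.le_def, Fin.coe_castSucc, Fin.val_succ]
        omega
      omega
    · have : m s2.succ ≤ m s1.castSucc := by
        apply hmono
        rw [Fin.le_def, Fin.coe_castSucc, Fin.val_succ]
        omega
      omega
  -- the new exchange pairs
  set X' : Fin c → Finset E := fun s => (block s).biUnion X with hX'
  set Y' : Fin c → Finset E := fun s => (block s).biUnion Y with hY'
  have hbiUd : ∀ (Z : Fin ℓ → Finset E), (∀ i j : Fin ℓ, i ≠ j → Disjoint (Z i) (Z j)) →
      ∀ s1 s2 : Fin c, s1 ≠ s2 → Disjoint ((block s1).biUnion Z) ((block s2).biUnion Z) := by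
    intro Z hZ s1 s2 h12
    rw [Finset.disjoint_biUnion_left]
    intro a ha
    rw [Finset.disjoint_biUnion_right]
    intro b hb
    refine hZ a b fun hab => ?_
    exact Finset.disjoint_left.mp (hblock_disj s1 s2 h12) ha (hab ▸ hb)
  obtain ⟨s, s', hss', hgood⟩ :=
    h E (fun u => Γ (t.succAbove u)) (fun u => ψ (t.succAbove u))
      (fun u => f (t.succAbove u)) B c X' Y'
      (fun u => hB _)
      (fun s => Finset.biUnion_subset.mpr fun a _ => hXB a)
      (by
        intro s e he
        rw [hY', Finset.mem_biUnion] at he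
        obtain ⟨a, _, hea⟩ := he
        exact hYB a e hea)
      (by
        intro s
        obtain ⟨a, ha⟩ := hblock_ne s
        obtain ⟨e, he⟩ := hXne a
        exact ⟨e, Finset.mem_biUnion.mpr ⟨a, ha, he⟩⟩)
      (by
        intro s
        obtain ⟨a, ha⟩ := hblock_ne s
        obtain ⟨e, he⟩ := hYne a
        exact ⟨e, Finset.mem_biUnion.mpr ⟨a, ha, he⟩⟩)
      (hbiUd X hXd) (hbiUd Y hYd) le_rfl
  -- translate the new interval back to an old one
  set p : ℕ := m s.castSucc with hp
  set q : ℕ := m s'.succ with hq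
  have hpq : p < q := by
    apply hstrict
    rw [Fin.lt_def, Fin.coe_castSucc, Fin.val_succ]
    have := Fin.le_def.mp hss'
    omega
  have hqℓ : q ≤ ℓ := hmℓ _
  have hq1 : 1 ≤ q := hm1 _
  have hpℓ : p < ℓ := lt_of_lt_of_le hpq hqℓ
  set i : Fin ℓ := ⟨p, hpℓ⟩ with hi
  set j : Fin ℓ := ⟨q - 1, by omega⟩ with hj
  have hij : i ≤ j := Fin.mk_le_mk.mpr (by omega)
  have key : Finset.Icc i j = Tset ℓ p q := by
    rw [Icc_eq_Tset]
    show Tset ℓ p (q - 1 + 1) = Tset ℓ p q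
    rw [Nat.sub_add_cancel hq1]
  have hbiU : (Finset.Icc s s').biUnion block = Tset ℓ p q :=
    Tset_biUnion_blocks m hmono (s'.val - s.val) s s'
      (by have := Fin.le_def.mp hss'; omega)
  have hsetX : (Finset.Icc s s').biUnion X' = (Finset.Icc i j).biUnion X := by
    rw [key, ← hbiU, Finset.biUnion_biUnion]
  have hsetY : (Finset.Icc s s').biUnion Y' = (Finset.Icc i j).biUnion Y := by
    rw [key, ← hbiU, Finset.biUnion_biUnion]
  obtain ⟨t', ht'⟩ := hcon i j hij
  by_cases htt : t' = t
  · subst htt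
    rw [hval t' (Finset.Icc i j), key,
        hMeq p q (hmmem _) (hmmem _) hpq.le, add_zero] at ht'
    exact hB t' ht'
  · obtain ⟨u, hu⟩ := Fin.exists_succAbove_eq htt
    have hg := hgood u
    rw [hsetX, hsetY] at hg
    subst hu
    exact hg ht'

/-- Claim 5.3: `c_k ≤ k · c_{k-1} + 1` for all `k ≥ 1` (in particular `c_k` is finite). -/
theorem stmt_4 (k : ℕ) (hk : 1 ≤ k) : cseq k ≤ k * cseq (k - 1) + 1 := by
  obtain ⟨k', rfl⟩ : ∃ k', k = k' + 1 := ⟨k - 1, by omega⟩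
  simp only [Nat.add_sub_cancel]
  rcases eq_or_ne (cseq k') ⊤ with htop | hfin
  · rw [htop]
    have h1 : ((k' + 1 : ℕ) : ℕ∞) ≠ 0 := by
      simp
    rw [ENat.mul_top h1, top_add]
    exact le_top
  · obtain ⟨cval, hc⟩ := WithTop.ne_top_iff_exists.mp hfin
    have hex : ∃ n : ℕ, Good k' n ∧ (n : ℕ∞) ≤ cseq k' := by
      by_contra hno
      push_neg at hno
      have hge : ((cval + 1 : ℕ) : ℕ∞) ≤ cseq k' := by
        apply le_sInf
        rintro b ⟨n, hn, rfl⟩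
        have := hno n hn
        rw [← hc] at this
        have hlt : cval < n := Nat.cast_lt.mp this
        exact Nat.cast_le.mpr hlt
      rw [← hc] at hge
      exact absurd (Nat.cast_le.mp hge) (by omega)
    obtain ⟨n, hn, hnle⟩ := hex
    have h2 : Good (k' + 1) ((k' + 1) * n + 1) := good_step k' n hn
    have h3 : cseq (k' + 1) ≤ (((k' + 1) * n + 1 : ℕ) : ℕ∞) := sInf_le ⟨_, h2, rfl⟩
    refine h3.trans ?_
    push_cast
    have : ((n : ℕ∞)) ≤ cseq k' := hnle
    gcongr
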